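/- arXiv:1910.11716 — 4 statements merged into one kernel-verified Lean document; each statement's English description precedes it below -/
import Mathlib

section
/- Let X be a locally path-connected topological space and let π : E → X be a covering map. Let n ∈ ℕ, let W₀, …, Wₙ be open path-connected subsets of X, let x ∈ ⋂ⱼ Wⱼ, and let x̃ ∈ E with π(x̃) = x. For each j let Vⱼ be the path component of π⁻¹(Wⱼ) containing x̃. Then x̃ ∈ ⋂ⱼ Vⱼ (so ⋂ⱼ Vⱼ ≠ ∅), π(Vⱼ) = Wⱼ for every j, and if the sets W₀, …, Wₙ are pairwise distinct, then V₀, …, Vₙ are pairwise distinct. (In other words, every n-simplex of the nerve of the cover lifts to an n-simplex of the nerve of the lifted cover.) -/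
/-- `V` is a path component of `A`: an equivalence class of points of `A` under
the relation "joined by a path lying inside `A`", regarded as a subset of the
ambient space. -/
def IsPathComponentIn {E : Type*} [TopologicalSpace E] (V A : Set E) : Prop :=
  ∃ x ∈ A, V = pathComponentIn A x

open Set in
/-- Around every point of an open set `W` in the base of a covering map, there is a "good"
open neighbourhood `U ⊆ W`: every point of `E` over `U` lies in a path-connected set over `U`
mapping onto `U`. -/
lemma exists_good_nbhd {E X : Type*} [TopologicalSpace E] [TopologicalSpace X]
    [LocallyPathConnectedSpace X] {π : E → X} (hπ : IsCoveringMap π)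
    {W : Set X} (hW : IsOpen W) {w : X} (hw : w ∈ W) :
    ∃ U : Set X, IsOpen U ∧ w ∈ U ∧ U ⊆ W ∧
      ∀ e : E, π e ∈ U → ∃ K : Set E,
        IsPathConnected K ∧ e ∈ K ∧ K ⊆ π ⁻¹' U ∧ π '' K = U := by
  by_cases hne : Nonempty (π ⁻¹' {w})
  swap
  · obtain ⟨-, U0, hwU0, hU0, -, H, -⟩ := hπ w
    refine ⟨W ∩ U0, hW.inter hU0, ⟨hw, hwU0⟩, inter_subset_left, fun e he => ?_⟩
    exact absurd ⟨(H ⟨e, he.2⟩).2⟩ hne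
  haveI := hne
  let t := (hπ w).toTrivialization
  have hwt := (hπ w).mem_toTrivialization_baseSet
  set U := pathComponentIn (W ∩ t.baseSet) w with hU
  have hUopen : IsOpen U := (hW.inter t.open_baseSet).pathComponentIn w
  have hwU : w ∈ U := mem_pathComponentIn_self ⟨hw, hwt⟩
  have hUW : U ⊆ W := pathComponentIn_subset.trans inter_subset_left
  have hUb : U ⊆ t.baseSet := pathComponentIn_subset.trans inter_subset_right
  have hUpc : IsPathConnected U := isPathConnected_pathComponentIn ⟨hw, hwt⟩
  refine ⟨U, hUopen, hwU, hUW, fun e he => ?_⟩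
  set s : X → E := fun y => t.toOpenPartialHomeomorph.symm (y, (t e).2) with hs
  have hsec : ∀ y ∈ U, π (s y) = y := fun y hy =>
    t.proj_symm_apply (t.mem_target.2 (hUb hy))
  have hcont : ContinuousOn s U := by
    apply t.toOpenPartialHomeomorph.continuousOn_symm.comp
      (Continuous.continuousOn (by fun_prop))
    intro y hy
    exact t.mem_target.2 (hUb hy)
  have hse : s (π e) = e := by
    have hesrc : e ∈ t.source := t.mem_source.2 (hUb he)
    have : ((π e), (t e).2) = t e := Prod.ext (t.coe_fst hesrc).symm rfl
    rw [hs]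
    simp only [this]
    exact t.toOpenPartialHomeomorph.left_inv hesrc
  refine ⟨s '' U, hUpc.image' hcont, ⟨π e, he, hse⟩, ?_, ?_⟩
  · rintro _ ⟨y, hy, rfl⟩
    simpa [hsec y hy] using hy
  · apply Subset.antisymm
    · rintro _ ⟨_, ⟨y, hy, rfl⟩, rfl⟩
      rwa [hsec y hy]
    · intro y hy
      exact ⟨s y, ⟨y, hy, rfl⟩, hsec y hy⟩

open Set in
theorem stmt3 {E X : Type*} [TopologicalSpace E] [TopologicalSpace X]
    [LocallyPathConnectedSpace X] (π : E → X) (hπ : IsCoveringMap π)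
    (n : ℕ) (W : Fin (n + 1) → Set X)
    (hWopen : ∀ j, IsOpen (W j)) (hWpc : ∀ j, IsPathConnected (W j))
    (x : X) (hx : x ∈ ⋂ j, W j) (xt : E) (hxt : π xt = x)
    (V : Fin (n + 1) → Set E)
    (hV : ∀ j, V j = pathComponentIn (π ⁻¹' (W j)) xt) :
    (xt ∈ ⋂ j, V j) ∧ (∀ j, π '' V j = W j) ∧
      (Function.Injective W → Function.Injective V) := by
  have hxW : ∀ j, x ∈ W j := fun j => mem_iInter.1 hx j
  have hxtV : ∀ j, xt ∈ V j := fun j => by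
    rw [hV j]; exact mem_pathComponentIn_self (by simp [hxt, hxW j])
  have himg : ∀ j, π '' V j = W j := by
    intro j
    set A : Set E := π ⁻¹' (W j) with hA
    set S : Set X := π '' V j with hS
    have hSW : S ⊆ W j := by
      rintro _ ⟨e, he, rfl⟩
      have : e ∈ A := (hV j ▸ he :) |> pathComponentIn_subset
      exact this
    -- key: a good neighbourhood meeting S is contained in S
    have key : ∀ w ∈ W j, ∀ U : Set X, (U ⊆ W j) →
        (∀ e : E, π e ∈ U → ∃ K : Set E,
          IsPathConnected K ∧ e ∈ K ∧ K ⊆ π ⁻¹' U ∧ π '' K = U) →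
        (U ∩ S).Nonempty → U ⊆ S := by
      intro w hw U hUW hUgood ⟨y, hyU, hyS⟩
      obtain ⟨e, heV, rfl⟩ := hyS
      obtain ⟨K, hKpc, heK, hKU, hKim⟩ := hUgood e hyU
      have hKA : K ⊆ A := hKU.trans (preimage_mono hUW)
      have hKV : K ⊆ V j := by
        rw [hV j, ← pathComponentIn_congr (hV j ▸ heV)]
        exact hKpc.subset_pathComponentIn heK hKA
      rw [← hKim]
      exact image_mono hKV
    refine Subset.antisymm hSW ?_
    by_contra hcon
    obtain ⟨w, hwW, hwS⟩ := not_subset.1 hcon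
    -- choose good neighbourhoods
    choose U hUopen hmem hUW hUgood using
      fun (p : W j) => exists_good_nbhd hπ (hWopen j) p.2
    set O₁ : Set X := ⋃ (p : W j) (_ : (p : X) ∈ S), U p with hO₁
    set O₂ : Set X := ⋃ (p : W j) (_ : (p : X) ∉ S), U p with hO₂
    have hO₁S : O₁ ⊆ S := by
      rintro y hy
      simp only [hO₁, mem_iUnion] at hy
      obtain ⟨p, hpS, hyU⟩ := hy
      exact key p p.2 (U p) (hUW p) (hUgood p) ⟨p, hmem p, hpS⟩ hyU
    have hO₂S : O₂ ∩ S = ∅ := by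
      rw [eq_empty_iff_forall_notMem]
      rintro y ⟨hy, hyS⟩
      simp only [hO₂, mem_iUnion] at hy
      obtain ⟨p, hpS, hyU⟩ := hy
      exact hpS (key p p.2 (U p) (hUW p) (hUgood p) ⟨y, hyU, hyS⟩ (hmem p))
    have hpre : IsPreconnected (W j) := (hWpc j).isConnected.isPreconnected
    have hsub : W j ⊆ O₁ ∪ O₂ := by
      intro y hy
      by_cases hyS : y ∈ S
      · exact Or.inl (mem_iUnion.2 ⟨⟨y, hy⟩, mem_iUnion.2 ⟨hyS, hmem _⟩⟩)
      · exact Or.inr (mem_iUnion.2 ⟨⟨y, hy⟩, mem_iUnion.2 ⟨hyS, hmem _⟩⟩)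
    have hne := hpre O₁ O₂ (isOpen_iUnion fun p => isOpen_iUnion fun _ => hUopen p)
      (isOpen_iUnion fun p => isOpen_iUnion fun _ => hUopen p) hsub
      ⟨x, hxW j, mem_iUnion.2 ⟨⟨x, hxW j⟩, mem_iUnion.2 ⟨⟨xt, hxtV j, hxt⟩, hmem _⟩⟩⟩
      ⟨w, hwW, mem_iUnion.2 ⟨⟨w, hwW⟩, mem_iUnion.2 ⟨hwS, hmem _⟩⟩⟩
    obtain ⟨z, -, hz₁, hz₂⟩ := hne
    exact absurd ⟨hz₂, hO₁S hz₁⟩ (eq_empty_iff_forall_notMem.1 hO₂S z)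
  refine ⟨mem_iInter.2 hxtV, himg, fun hWinj i j hij => ?_⟩
  apply hWinj
  rw [← himg i, ← himg j, hij]
end

section
/- Let X be a locally path-connected topological space, let π : E → X be a covering map, let W ⊆ X be an open subset, let φ : X → ℝ be a continuous function with φ(x) = 0 for all x ∉ W, and let V be a path component of π⁻¹(W). Then the function E → ℝ given by the indicator of V times φ ∘ π (that is, x̃ ↦ φ(π(x̃)) if x̃ ∈ V and x̃ ↦ 0 otherwise) is continuous. -/
open Set

theorem IsLocalHomeomorph.locPathConnectedSpace' {E X : Type*} [TopologicalSpace E]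
    [TopologicalSpace X] [LocallyPathConnectedSpace X] {π : E → X}
    (hπ : IsLocalHomeomorph π) : LocallyPathConnectedSpace E := by
  rw [locallyPathConnectedSpace_iff_pathComponentIn_mem_nhds]
  intro e u hu heu
  obtain ⟨p, hep, rfl⟩ := hπ e
  -- the image of `u ∩ p.source` is open in `X`
  have hUopen : IsOpen (u ∩ p.source) := hu.inter p.open_source
  have heU : e ∈ u ∩ p.source := ⟨heu, hep⟩
  have himg : IsOpen (p '' (u ∩ p.source)) :=
    p.isOpen_image_of_subset_source hUopen inter_subset_right
  have hpeU : p e ∈ p '' (u ∩ p.source) := mem_image_of_mem _ heU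
  -- path component of `p e` in the image
  set P := pathComponentIn (p '' (u ∩ p.source)) (p e) with hP
  have hPopen : IsOpen P := himg.pathComponentIn _
  have hPsub : P ⊆ p '' (u ∩ p.source) := pathComponentIn_subset
  have hPtarget : P ⊆ p.target := fun y hy => by
    obtain ⟨z, hz, rfl⟩ := hPsub hy
    exact p.map_source hz.2
  have hPconn : IsPathConnected P := isPathConnected_pathComponentIn hpeU
  -- pull back to `E`
  set S := p.symm '' P with hS
  have hSopen : IsOpen S := p.isOpen_image_symm_of_subset_target hPopen hPtarget
  have hSconn : IsPathConnected S :=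
    hPconn.image' (p.continuousOn_symm.mono hPtarget)
  have heS : e ∈ S := ⟨p e, mem_pathComponentIn_self hpeU, p.left_inv hep⟩
  have hSu : S ⊆ u := by
    intro y hy
    obtain ⟨z, hz, rfl⟩ := hy
    obtain ⟨w, hw, rfl⟩ := hPsub hz
    rw [p.left_inv hw.2]
    exact hw.1
  exact Filter.mem_of_superset (hSopen.mem_nhds heS)
    (hSconn.subset_pathComponentIn heS hSu)

theorem stmt6 {E X : Type*} [TopologicalSpace E] [TopologicalSpace X]
    [LocallyPathConnectedSpace X] (π : E → X) (hπ : IsCoveringMap π)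
    (W : Set X) (hWopen : IsOpen W)
    (φ : X → ℝ) (hφ : Continuous φ) (hφ0 : ∀ x ∉ W, φ x = 0)
    (V : Set E) (hV : IsPathComponentIn V (π ⁻¹' W)) :
    Continuous (Set.indicator V (φ ∘ π)) := by
  have : LocallyPathConnectedSpace E := hπ.isLocalHomeomorph.locPathConnectedSpace'
  obtain ⟨x₀, hx₀, rfl⟩ := hV
  have hπc : Continuous π := hπ.continuous
  have hAopen : IsOpen (π ⁻¹' W) := hWopen.preimage hπc
  have hVopen : IsOpen (pathComponentIn (π ⁻¹' W) x₀) := hAopen.pathComponentIn x₀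
  apply continuous_indicator _ ((hφ.comp hπc).continuousOn)
  intro a ha
  show φ (π a) = 0
  apply hφ0
  intro hπa
  -- `a ∈ π ⁻¹' W`, and `a` is in the closure of `V`, so `a ∈ V`, contradicting frontier
  have haA : a ∈ π ⁻¹' W := hπa
  have hnhds : pathComponentIn (π ⁻¹' W) a ∈ nhds a :=
    (hAopen.pathComponentIn a).mem_nhds (mem_pathComponentIn_self haA)
  have hacl : a ∈ closure (pathComponentIn (π ⁻¹' W) x₀) := ha.1
  obtain ⟨b, hb1, hb2⟩ := mem_closure_iff_nhds.mp hacl _ hnhds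
  have h1 : JoinedIn (π ⁻¹' W) a b := hb1
  have h2 : JoinedIn (π ⁻¹' W) x₀ b := hb2
  have haV : a ∈ pathComponentIn (π ⁻¹' W) x₀ := h2.trans h1.symm
  exact ha.2 (hVopen.interior_eq.symm ▸ haV)
end

section
/- Let X be a locally path-connected topological space and let π : E → X be a covering map. Let n ∈ ℕ, let W₀, …, Wₙ be open path-connected subsets of X, and for each j let Vⱼ be a path component of π⁻¹(Wⱼ); assume V₀, …, Vₙ are pairwise distinct and ⋂ⱼ Vⱼ ≠ ∅. Let γ : E → E be a homeomorphism with π ∘ γ = π such that for every j there exists k with γ(Vⱼ) = V_k (γ permutes the set {V₀, …, Vₙ}). Then γ(Vⱼ) = Vⱼ for every j. (A deck transformation stabilising a simplex of the lifted nerve fixes each of its vertices.) -/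
lemma homeo_image_pathComponentIn {E : Type*} [TopologicalSpace E] (γ : E ≃ₜ E)
    (x : E) (A : Set E) : ⇑γ '' pathComponentIn A x = pathComponentIn (⇑γ '' A) (γ x) := by
  ext y
  constructor
  · rintro ⟨z, hz, rfl⟩
    exact hz.map γ.continuous
  · intro hy
    refine ⟨γ.symm y, ?_, γ.apply_symm_apply y⟩
    have := hy.map γ.symm.continuous
    exact (by simpa [Set.image_image] using this : JoinedIn A x (γ.symm y))

theorem stmt9 {E X : Type*} [TopologicalSpace E] [TopologicalSpace X]
    [LocallyPathConnectedSpace X] (π : E → X) (hπ : IsCoveringMap π)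
    (n : ℕ) (W : Fin (n + 1) → Set X)
    (hWopen : ∀ j, IsOpen (W j)) (hWpc : ∀ j, IsPathConnected (W j))
    (V : Fin (n + 1) → Set E)
    (hV : ∀ j, IsPathComponentIn (V j) (π ⁻¹' (W j)))
    (hVinj : Function.Injective V)
    (hVne : (⋂ j, V j).Nonempty)
    (γ : E ≃ₜ E) (hγ : π ∘ γ = π)
    (hperm : ∀ j, ∃ k, ⇑γ '' V j = V k) :
    ∀ j, ⇑γ '' V j = V j := by
  choose σ hσ using hperm
  have hσinj : Function.Injective σ := by
    intro i j hij
    apply hVinj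
    apply Set.image_injective.mpr γ.injective
    rw [hσ i, hσ j, hij]
  have hσsurj : Function.Surjective σ := Finite.surjective_of_injective hσinj
  obtain ⟨e, he⟩ := hVne
  have he' : ∀ j, e ∈ V j := fun j => Set.mem_iInter.mp he j
  have hγe : ∀ k, γ e ∈ V k := by
    intro k
    obtain ⟨j, rfl⟩ := hσsurj k
    rw [← hσ j]
    exact Set.mem_image_of_mem _ (he' j)
  -- γ fixes π ⁻¹' W for any W
  have himg : ∀ (S : Set X), ⇑γ '' (π ⁻¹' S) = π ⁻¹' S := by
    intro S
    rw [Set.image_eq_preimage_of_inverse γ.symm_apply_apply γ.apply_symm_apply]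
    have : π ∘ ⇑γ.symm = π := by
      funext x
      calc π (γ.symm x) = π (γ (γ.symm x)) := (congrFun hγ (γ.symm x)).symm
        _ = π x := by rw [γ.apply_symm_apply]
    rw [← Set.preimage_comp, this]
  intro j
  obtain ⟨x, hx, hVx⟩ := hV j
  have hVe : V j = pathComponentIn (π ⁻¹' (W j)) e := by
    rw [hVx]
    exact (pathComponentIn_congr (hVx ▸ he' j)).symm
  have hVγe : V j = pathComponentIn (π ⁻¹' (W j)) (γ e) := by
    rw [hVx]
    exact (pathComponentIn_congr (hVx ▸ hγe j)).symm
  rw [hVe, homeo_image_pathComponentIn, himg, ← hVγe, hVe]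
end

section
/- Let C be a maximal cyclic subgroup of the free group F₂ on two generators, i.e., C is cyclic and every cyclic subgroup of F₂ containing C equals C. Then the normaliser of C in F₂ is C itself: Subgroup.normalizer C = C. -/
open Subgroup

/-- A commutative free group is cyclic and torsion-free. -/
lemma free_comm_aux (G : Type*) [Group G] [IsFreeGroup G]
    (hcomm : ∀ a b : G, a * b = b * a) :
    IsCyclic G ∧ ∀ (x : G) (n : ℕ), n ≠ 0 → x ^ n = 1 → x = 1 := by
  classical
  set ι := IsFreeGroup.Generators G with hι
  -- generators are a subsingleton
  have hsub : Subsingleton ι := by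
    by_contra h
    rw [not_subsingleton_iff_nontrivial] at h
    obtain ⟨a, b, hab⟩ := h.exists_pair_ne
    set s1 : Equiv.Perm (Fin 3) := Equiv.swap 0 1
    set s2 : Equiv.Perm (Fin 3) := Equiv.swap 1 2
    set f : ι → Equiv.Perm (Fin 3) := fun x => if x = a then s1 else if x = b then s2 else 1
    set φ : G →* Equiv.Perm (Fin 3) := IsFreeGroup.lift f
    have h1 : φ (IsFreeGroup.of a) = s1 := by simp [φ, f, IsFreeGroup.lift_of]
    have h2 : φ (IsFreeGroup.of b) = s2 := by
      simp [φ, f, IsFreeGroup.lift_of, hab.symm]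
    have := hcomm (IsFreeGroup.of a) (IsFreeGroup.of b)
    have hc : s1 * s2 = s2 * s1 := by
      rw [← h1, ← h2, ← map_mul, ← map_mul, this]
    have := congrArg (fun p => p.toFun 0) hc
    simp [s1, s2, Equiv.Perm.mul_apply, Equiv.swap_apply_def] at this
  have e : G ≃* FreeGroup ι := IsFreeGroup.toFreeGroup G
  rcases isEmpty_or_nonempty ι with he | hne
  · -- trivial
    have htriv : ∀ x : FreeGroup ι, x = 1 := by
      intro x
      refine FreeGroup.induction_on x rfl (fun a => isEmptyElim a) (fun a _ => isEmptyElim a)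
        (fun x y hx hy => by rw [hx, hy, one_mul])
    have : ∀ x : G, x = 1 := fun x => e.injective (by rw [htriv (e x), map_one])
    constructor
    · exact ⟨1, fun x => ⟨0, by simp [this x]⟩⟩
    · exact fun x n _ _ => this x
  · obtain ⟨a⟩ := hne
    have key : ∀ x : FreeGroup ι, ∃ k : ℤ, x = FreeGroup.of a ^ k := by
      intro x
      refine FreeGroup.induction_on x ⟨0, by simp⟩ (fun b => ⟨1, by
        rw [zpow_one, Subsingleton.elim b a]⟩) ?_ ?_
      · rintro b ⟨k, hk⟩
        exact ⟨-k, by rw [zpow_neg, ← hk]⟩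
      · rintro x y ⟨k, hk⟩ ⟨l, hl⟩
        exact ⟨k + l, by rw [hk, hl, zpow_add]⟩
    set ψ : FreeGroup ι →* Multiplicative ℤ :=
      FreeGroup.lift (fun _ => Multiplicative.ofAdd (1 : ℤ))
    have hψ : ∀ k : ℤ, ψ (FreeGroup.of a ^ k) = Multiplicative.ofAdd k := by
      intro k
      rw [map_zpow, FreeGroup.lift_apply_of, ← ofAdd_zsmul, smul_eq_mul, mul_one]
    have hord : ∀ k : ℤ, FreeGroup.of a ^ k = 1 → k = 0 := by
      intro k hk
      have := congrArg ψ hk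
      rw [hψ, map_one] at this
      exact ofAdd_eq_one.mp this
    constructor
    · refine ⟨e.symm (FreeGroup.of a), fun x => ?_⟩
      obtain ⟨k, hk⟩ := key (e x)
      exact ⟨k, show e.symm (FreeGroup.of a) ^ k = x by
        rw [← map_zpow, ← hk, MulEquiv.symm_apply_apply]⟩
    · intro x n hn hx
      obtain ⟨k, hk⟩ := key (e x)
      have : e x ^ n = 1 := by rw [← map_pow, hx, map_one]
      rw [hk, ← zpow_natCast, ← zpow_mul] at this
      have := hord _ this
      have hk0 : k = 0 := by
        rcases mul_eq_zero.1 this with h | h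
        · exact h
        · exact absurd (by exact_mod_cast h) hn
      apply e.injective
      rw [hk, hk0, zpow_zero, map_one]

/-- A commutative subgroup of `FreeGroup (Fin 2)` is cyclic and torsion-free. -/
lemma comm_subgroup_free (H : Subgroup (FreeGroup (Fin 2)))
    (hcomm : ∀ a b : H, a * b = b * a) :
    IsCyclic H ∧ ∀ (x : H) (n : ℕ), n ≠ 0 → x ^ n = 1 → x = 1 :=
  free_comm_aux H hcomm

lemma closure_pair_comm {G : Type*} [Group G] (c n : G) (h : c * n = n * c) :
    ∀ a b : Subgroup.closure {c, n}, a * b = b * a := by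
  have hpair : ∀ x ∈ ({c, n} : Set G), ∀ y ∈ ({c, n} : Set G), Commute x y := by
    rintro x (rfl | rfl) y (rfl | rfl)
    · exact Commute.refl _
    · exact h
    · exact h.symm
    · exact Commute.refl _
  have main : ∀ x ∈ Subgroup.closure ({c, n} : Set G),
      ∀ y ∈ Subgroup.closure ({c, n} : Set G), Commute x y := by
    intro x hx y hy
    induction hx, hy using Subgroup.closure_induction₂ with
    | mem a b ha hb => exact hpair a ha b hb
    | one_left => exact Commute.one_left _
    | one_right => exact Commute.one_right _
    | mul_left a b y _ _ _ h1 h2 => exact h1.mul_left h2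
    | mul_right a b y _ _ _ h1 h2 => exact h1.mul_right h2
    | inv_left a y _ _ h1 => exact h1.inv_left
    | inv_right a y _ _ h1 => exact h1.inv_right
  rintro ⟨a, ha⟩ ⟨b, hb⟩
  exact Subtype.ext (main a ha b hb)

theorem stmt11 (C : Subgroup (FreeGroup (Fin 2))) (hC : IsCyclic C)
    (hmax : ∀ D : Subgroup (FreeGroup (Fin 2)), IsCyclic D → C ≤ D → D = C) :
    Subgroup.normalizer C = C := by
  obtain ⟨⟨c, hcC⟩, hgen⟩ := hC
  have hCeq : C = Subgroup.zpowers c := by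
    apply le_antisymm
    · intro x hx
      obtain ⟨k, hk⟩ := hgen ⟨x, hx⟩
      exact ⟨k, congrArg Subtype.val hk⟩
    · rw [Subgroup.zpowers_le]; exact hcC
  -- key: any element commuting with c lies in C
  have key : ∀ g : FreeGroup (Fin 2), c * g = g * c → g ∈ C := by
    intro g hg
    set D := Subgroup.closure ({c, g} : Set (FreeGroup (Fin 2)))
    have hDcyc : IsCyclic D := (comm_subgroup_free D (closure_pair_comm c g hg)).1
    have hCD : C ≤ D := by
      rw [hCeq, Subgroup.zpowers_le]
      exact Subgroup.subset_closure (Set.mem_insert _ _)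
    have := hmax D hDcyc hCD
    rw [← this]
    exact Subgroup.subset_closure (Set.mem_insert_of_mem _ rfl)
  by_cases hc1 : c = 1
  · -- C = ⊥, contradiction with maximality via zpowers (of 0)
    exfalso
    have hbot : C = ⊥ := by
      rw [hCeq, hc1, Subgroup.zpowers_one_eq_bot]
    set D := Subgroup.zpowers (FreeGroup.of (0 : Fin 2))
    have hcomm : ∀ a b : D, a * b = b * a := by
      rintro ⟨a, i, rfl⟩ ⟨b, j, rfl⟩
      exact Subtype.ext (Commute.zpow_zpow_self _ i j)
    have hDcyc : IsCyclic D := (comm_subgroup_free D hcomm).1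
    have := hmax D hDcyc (by rw [hbot]; exact bot_le)
    have h0 : FreeGroup.of (0 : Fin 2) ∈ D := Subgroup.mem_zpowers _
    rw [this, hbot, Subgroup.mem_bot] at h0
    set ψ : FreeGroup (Fin 2) →* Multiplicative ℤ :=
      FreeGroup.lift (fun _ => Multiplicative.ofAdd (1 : ℤ))
    have h1 : ψ (FreeGroup.of (0 : Fin 2)) = Multiplicative.ofAdd 1 := FreeGroup.lift_apply_of
    rw [h0, map_one] at h1
    exact one_ne_zero (ofAdd_eq_one.mp h1.symm)
  · -- C torsion-free, so c has infinite order in C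
    have hCcomm : ∀ a b : C, a * b = b * a := by
      intro a b
      obtain ⟨i, hi⟩ := hgen a
      obtain ⟨j, hj⟩ := hgen b
      rw [← hi, ← hj]
      exact (Commute.zpow_zpow_self _ j i).symm
    have hCtf := (comm_subgroup_free C hCcomm).2
    set cb : C := ⟨c, hcC⟩
    have hcb1 : cb ≠ 1 := fun h => hc1 (congrArg Subtype.val h)
    have hord : orderOf cb = 0 := by
      by_contra h
      exact hcb1 (hCtf cb (orderOf cb) h (pow_orderOf_eq_one cb))
    have hzpow : ∀ k : ℤ, cb ^ k = 1 → k = 0 := by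
      intro k hk
      have := orderOf_dvd_iff_zpow_eq_one.2 hk
      rw [hord] at this
      exact_mod_cast zero_dvd_iff.1 this
    have hzpow' : ∀ k : ℤ, c ^ k = 1 → k = 0 := by
      intro k hk
      refine hzpow k (Subtype.ext ?_)
      rw [SubgroupClass.coe_zpow]
      exact hk
    apply le_antisymm _ Subgroup.le_normalizer
    intro n hn
    rw [Subgroup.mem_normalizer_iff] at hn
    have h1 : n * c * n⁻¹ ∈ C := (hn c).1 hcC
    rw [hCeq] at h1
    obtain ⟨k, hk'⟩ := h1
    have hk : c ^ k = n * c * n⁻¹ := hk'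
    have h2 : n⁻¹ * c * n ∈ C := by
      have := (hn (n⁻¹ * c * n)).2
      simp only [mul_assoc] at this ⊢
      apply this
      simpa [mul_assoc, ← mul_assoc] using hcC
    rw [hCeq] at h2
    obtain ⟨m, hm'⟩ := h2
    have hm : c ^ m = n⁻¹ * c * n := hm'
    -- c = c ^ (k * m)
    have hcmk : c ^ (k * m) = c := by
      calc c ^ (k * m) = (c ^ m) ^ k := by rw [mul_comm, zpow_mul]
        _ = (n⁻¹ * c * n⁻¹⁻¹) ^ k := by rw [inv_inv, hm]
        _ = n⁻¹ * c ^ k * n⁻¹⁻¹ := conj_zpow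
        _ = n⁻¹ * (n * c * n⁻¹) * n := by rw [hk, inv_inv]
        _ = c := by group
    have hkm : k * m = 1 := by
      have : c ^ (k * m - 1) = 1 := by
        rw [zpow_sub, hcmk, zpow_one, mul_inv_cancel]
      have := hzpow' _ this
      omega
    have hk1 : k = 1 ∨ k = -1 := Int.isUnit_iff.1 (IsUnit.of_mul_eq_one _ hkm)
    rcases hk1 with rfl | rfl
    · -- n commutes with c
      rw [zpow_one] at hk
      apply key n
      calc c * n = (n * c * n⁻¹) * n := by rw [← hk]
        _ = n * c := by group
    · -- n c n⁻¹ = c⁻¹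
      rw [zpow_neg_one] at hk
      have hk2 : n * c * n⁻¹ = c⁻¹ := hk.symm
      have hconj2 : (n * n) * c * (n * n)⁻¹ = c := by
        calc (n * n) * c * (n * n)⁻¹ = n * (n * c * n⁻¹) * n⁻¹ := by group
          _ = n * c⁻¹ * n⁻¹ := by rw [hk2]
          _ = (n * c * n⁻¹)⁻¹ := by group
          _ = c := by rw [hk2, inv_inv]
      have hsq : c * (n * n) = (n * n) * c := by
        conv_lhs => rw [← hconj2]
        group
      have hn2 : n * n ∈ C := key (n * n) hsq
      rw [hCeq] at hn2
      obtain ⟨j, hj'⟩ := hn2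
      have hj : c ^ j = n * n := hj'
      have h3 : c ^ (-j) = c ^ j := by
        calc c ^ (-j) = (c⁻¹) ^ j := by rw [inv_zpow, zpow_neg]
          _ = (n * c * n⁻¹) ^ j := by rw [hk2]
          _ = n * c ^ j * n⁻¹ := conj_zpow
          _ = n * (n * n) * n⁻¹ := by rw [hj]
          _ = n * n := by group
          _ = c ^ j := hj.symm
      have hj0 : j = 0 := by
        have h4 : c ^ (j + -j) = c ^ (j + j) := by rw [zpow_add, zpow_add, h3]
        rw [add_neg_cancel, zpow_zero] at h4
        have := hzpow' (j + j) h4.symm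
        omega
      have hn2one : n * n = 1 := by rw [← hj, hj0, zpow_zero]
      set E := Subgroup.zpowers n
      have hEcomm : ∀ a b : E, a * b = b * a := by
        rintro ⟨a, i, rfl⟩ ⟨b, l, rfl⟩
        exact Subtype.ext (Commute.zpow_zpow_self _ i l)
      have hEtf := (comm_subgroup_free E hEcomm).2
      have : (⟨n, Subgroup.mem_zpowers n⟩ : E) = 1 := by
        apply hEtf _ 2 two_ne_zero
        refine Subtype.ext ?_
        show n ^ 2 = 1
        rw [pow_two]
        exact hn2one
      have hn1 : n = 1 := congrArg Subtype.val this
      rw [hn1]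
      exact one_mem C
end
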